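/- Let p be a prime, t_2, t_3 natural numbers, and m a natural number. Then p divides every product C(t_2 + s, s) · C(t_3 + t, t) over all pairs of natural numbers (s,t) with s + t = p^{d'} for some 0 ≤ d' ≤ m, if and only if the base-p digits of t_2 in positions 0 through m are all equal to p-1 and the base-p digits of t_3 in positions 0 through m are all equal to p-1. -/

import Mathlib

open Finset

/-- Carry characterization of `p ∣ C(n+k, k)` (Kummer). -/
lemma dvd_choose_add_iff {p : ℕ} (hp : p.Prime) (n k : ℕ) :
    p ∣ Nat.choose (n + k) k ↔ ∃ i, 1 ≤ i ∧ p ^ i ≤ k % p ^ i + n % p ^ i := by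
  set b := Nat.log p (n + k) + 1 with hb
  rw [← emultiplicity_ne_zero,
    Nat.Prime.emultiplicity_choose' hp (show Nat.log p (n + k) < b from Nat.lt_succ_self _)]
  rw [Ne, Nat.cast_eq_zero, Finset.card_eq_zero, ← Ne, ← Finset.nonempty_iff_ne_empty]
  constructor
  · rintro ⟨i, hi⟩
    simp only [Finset.mem_filter, Finset.mem_Ico] at hi
    exact ⟨i, hi.1.1, hi.2⟩
  · rintro ⟨i, h1, h2⟩
    refine ⟨i, ?_⟩
    simp only [Finset.mem_filter, Finset.mem_Ico]
    refine ⟨⟨h1, ?_⟩, h2⟩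
    have hle : p ^ i ≤ n + k := by
      have h3 : k % p ^ i ≤ k := Nat.mod_le _ _
      have h4 : n % p ^ i ≤ n := Nat.mod_le _ _
      omega
    have hnk : n + k ≠ 0 := by
      have : 0 < p ^ i := pow_pos hp.pos i
      omega
    have := (Nat.le_log_iff_pow_le hp.one_lt hnk).2 hle
    omega

/-- mod by `p^(j+1)` decomposition. -/
lemma mod_pow_succ_eq {p : ℕ} (n j : ℕ) :
    n % p ^ (j + 1) = p ^ j * (n / p ^ j % p) + n % p ^ j := by
  conv_lhs => rw [pow_succ, ← Nat.div_add_mod (n % (p ^ j * p)) (p ^ j)]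
  rw [Nat.mod_mul_right_div_self, Nat.mod_mod_of_dvd _ (Dvd.intro p rfl)]

/-- Single power carry lemma. -/
lemma dvd_choose_pow_single {p : ℕ} (hp : p.Prime) (n j : ℕ) :
    p ∣ Nat.choose (n + p ^ j) (p ^ j) ↔ n / p ^ j % p = p - 1 := by
  have hp2 := hp.two_le
  rw [dvd_choose_add_iff hp]
  constructor
  · rintro ⟨i, h1, h2⟩
    have hji : j < i := by
      by_contra h
      push_neg at h
      have hd0 : p ^ j % p ^ i = 0 :=
        Nat.mod_eq_zero_of_dvd (pow_dvd_pow p h)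
      have := Nat.mod_lt n (pow_pos hp.pos i)
      omega
    -- notation
    set q := p ^ (j + 1) with hq
    set B := p ^ (i - (j + 1)) with hB
    set x := n % p ^ i with hx
    have hklow : B * q = p ^ i := by rw [hB, hq, ← pow_add]; congr 1; omega
    have hBpos : 0 < B := pow_pos hp.pos _
    have hxlt : x < p ^ i := Nat.mod_lt n (pow_pos hp.pos i)
    have hpj : p ^ j % p ^ i = p ^ j :=
      Nat.mod_eq_of_lt (Nat.pow_lt_pow_right hp.one_lt hji)
    rw [hpj] at h2
    have hpjq : p ^ j < q := Nat.pow_lt_pow_right hp.one_lt (Nat.lt_succ_self j)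
    have hqle : q ≤ p ^ i := by
      calc q ≤ B * q := Nat.le_mul_of_pos_left q hBpos
      _ = p ^ i := hklow
    have e2 : (B - 1) * q = p ^ i - q := by rw [tsub_mul, one_mul, hklow]
    have hdiv : x / q = B - 1 := by
      apply Nat.div_eq_of_lt_le
      · omega
      · have : B - 1 + 1 = B := by omega
        rw [this, hklow]; exact hxlt
    have hmad := Nat.mod_add_div x q
    rw [hdiv] at hmad
    have e3 : q * (B - 1) = p ^ i - q := by rw [mul_comm]; exact e2
    have hbound : q - p ^ j ≤ x % q := by omega
    have hxq : n % q = x % q := (Nat.mod_mod_of_dvd n (pow_dvd_pow p hji)).symm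
    have hdec := mod_pow_succ_eq (p := p) n j
    rw [← hq] at hdec
    have hrlt : n % p ^ j < p ^ j := Nat.mod_lt n (pow_pos hp.pos j)
    have hqeq : q = p ^ j * p := by rw [hq, pow_succ]
    have e1 : p ^ j * (p - 2) + 2 * p ^ j = p ^ j * p := by
      have h : (p - 2) + 2 = p := by omega
      calc p ^ j * (p - 2) + 2 * p ^ j = p ^ j * ((p - 2) + 2) := by ring
      _ = p ^ j * p := by rw [h]
    set d := n / p ^ j % p with hd
    have hdlt : d < p := Nat.mod_lt _ hp.pos
    have key : p ^ j * (p - 2) < p ^ j * d := by omega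
    have := Nat.lt_of_mul_lt_mul_left key
    omega
  · intro hd
    refine ⟨j + 1, Nat.succ_le_succ (Nat.zero_le _), ?_⟩
    have h1 : p ^ j % p ^ (j + 1) = p ^ j :=
      Nat.mod_eq_of_lt (Nat.pow_lt_pow_right hp.one_lt (Nat.lt_succ_self _))
    have h2 := mod_pow_succ_eq (p := p) n j
    calc p ^ (j + 1) = p ^ j * p := pow_succ p j
      _ = p ^ j * (1 + (p - 1)) := by rw [show 1 + (p - 1) = p by omega]
      _ = p ^ j + p ^ j * (p - 1) := by ring
      _ ≤ p ^ j % p ^ (j + 1) + n % p ^ (j + 1) := by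
          rw [h1, h2, hd]
          exact Nat.add_le_add_left (Nat.le_add_right _ _) _

/-- If all digits of `n` up to `m` are `p-1` and `0 < s ≤ p^m` then `p ∣ C(n+s,s)`. -/
lemma dvd_choose_of_digits {p n s m : ℕ} (hp : p.Prime) (hs : s ≠ 0) (hsm : s ≤ p ^ m)
    (hdig : ∀ i : ℕ, i ≤ m → n / p ^ i % p = p - 1) : p ∣ Nat.choose (n + s) s := by
  have hp2 := hp.two_le
  rw [dvd_choose_add_iff hp]
  set j := s.factorization p with hj
  have hpj : p ^ j ∣ s := Nat.ordProj_dvd s p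
  have hnd : ¬ p ∣ s / p ^ j := Nat.not_dvd_ordCompl hp hs
  have hjle : j ≤ m := by
    have h1 : p ^ j ≤ s := Nat.ordProj_le p hs
    exact (Nat.pow_le_pow_iff_right hp.one_lt).1 (h1.trans hsm)
  refine ⟨j + 1, Nat.succ_le_succ (Nat.zero_le _), ?_⟩
  have hsq : p ^ j ≤ s % p ^ (j + 1) := by
    rw [mod_pow_succ_eq]
    have h0 : s % p ^ j = 0 := Nat.mod_eq_zero_of_dvd hpj
    have h1 : s / p ^ j % p ≠ 0 := by
      intro h
      exact hnd (Nat.dvd_of_mod_eq_zero h)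
    calc p ^ j ≤ p ^ j * (s / p ^ j % p) :=
          Nat.le_mul_of_pos_right (p ^ j) (Nat.pos_of_ne_zero h1)
      _ ≤ p ^ j * (s / p ^ j % p) + s % p ^ j := Nat.le_add_right _ _
  have hnq : p ^ j * (p - 1) ≤ n % p ^ (j + 1) := by
    rw [mod_pow_succ_eq, hdig j hjle]
    exact Nat.le_add_right _ _
  calc p ^ (j + 1) = p ^ j * p := pow_succ p j
    _ = p ^ j * (1 + (p - 1)) := by rw [show 1 + (p - 1) = p by omega]
    _ = p ^ j + p ^ j * (p - 1) := by ring
    _ ≤ s % p ^ (j + 1) + n % p ^ (j + 1) := Nat.add_le_add hsq hnq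

/-- `p` divides every product `C(t₂+s,s)·C(t₃+t,t)` with `s + t = p^{d'}` for some
`d' ≤ m` iff all base-`p` digits of `t₂` and of `t₃` in positions `0,…,m` equal `p-1`. -/
theorem stmt_3 (p t₂ t₃ m : ℕ) (hp : p.Prime) :
    (∀ d' : ℕ, d' ≤ m → ∀ s t : ℕ, s + t = p ^ d' →
        p ∣ Nat.choose (t₂ + s) s * Nat.choose (t₃ + t) t) ↔
      ((∀ i : ℕ, i ≤ m → t₂ / p ^ i % p = p - 1) ∧
        (∀ i : ℕ, i ≤ m → t₃ / p ^ i % p = p - 1)) := by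
  constructor
  · intro H
    constructor
    · intro i hi
      have h := H i hi (p ^ i) 0 (by simp)
      simp only [Nat.choose_zero_right, mul_one] at h
      exact (dvd_choose_pow_single hp t₂ i).1 h
    · intro i hi
      have h := H i hi 0 (p ^ i) (by simp)
      simp only [Nat.choose_zero_right, one_mul] at h
      exact (dvd_choose_pow_single hp t₃ i).1 h
  · rintro ⟨h2, h3⟩ d' hd' s t hst
    rcases Nat.eq_zero_or_pos s with hs | hs
    · subst hs
      simp only [Nat.zero_add] at hst
      subst hst
      have ht : (p : ℕ) ^ d' ≠ 0 := (pow_pos hp.pos d').ne'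
      have htm : p ^ d' ≤ p ^ m := Nat.pow_le_pow_right hp.pos hd'
      exact Dvd.dvd.mul_left (dvd_choose_of_digits hp ht htm h3) _
    · have hsm : s ≤ p ^ m := by
        have : s ≤ p ^ d' := by omega
        exact this.trans (Nat.pow_le_pow_right hp.pos hd')
      exact Dvd.dvd.mul_right (dvd_choose_of_digits hp hs.ne' hsm h2) _
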